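/- Let q ∈ (0,1) and x ∈ Δ_2 with x_1 > x_2. Then G_3(x) > G_2(x). -/
import Mathlib


open Filter Topology

/-- The map G = (G₁,G₂,G₃) on ℝ³ (with parameter q):
G₁(x) = x₁² + 2q x₁ x₃, G₂(x) = x₂² + 2q x₂ x₃,
G₃(x) = x₃² + 2 x₁ x₂ + 2(1−q) x₁ x₃ + 2(1−q) x₂ x₃. -/
noncomputable def Gmap (q : ℝ) (x : ℝ × ℝ × ℝ) : ℝ × ℝ × ℝ :=
  (x.1 ^ 2 + 2 * q * x.1 * x.2.2,
   x.2.1 ^ 2 + 2 * q * x.2.1 * x.2.2,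
   x.2.2 ^ 2 + 2 * x.1 * x.2.1 + 2 * (1 - q) * x.1 * x.2.2
     + 2 * (1 - q) * x.2.1 * x.2.2)

/-- The open simplex Δ₂ ⊆ ℝ³. -/
def simplex2 : Set (ℝ × ℝ × ℝ) :=
  {p | p.1 + p.2.1 + p.2.2 = 1 ∧ 0 < p.1 ∧ 0 < p.2.1 ∧ 0 < p.2.2}

/-- If x ∈ Δ₂ with x₁ > x₂, then G₃(x) > G₂(x). -/
theorem G3_gt_G2 (q : ℝ) (hq0 : 0 < q) (hq1 : q < 1)
    (x : ℝ × ℝ × ℝ) (hx : x ∈ simplex2) (h12 : x.2.1 < x.1) :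
    (Gmap q x).2.1 < (Gmap q x).2.2 := by
  obtain ⟨hsum, h1, h2, h3⟩ := hx
  simp only [Gmap, simplex2] at *
  nlinarith [mul_pos (sub_pos.2 h12) h2, mul_nonneg (mul_nonneg (sub_pos.2 hq1).le (sub_pos.2 h12).le) h3.le, sq_nonneg (x.2.1 - x.2.2), mul_pos (sub_pos.2 hq1) (mul_pos h2 h3)]
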